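/- (Template descent inequality for OptDA.) Let (X_t), (X_{t+1/2}) be OptDA iterates in X with feedback (g_t) and positive nondecreasing learning rates (η_t). For t ≥ 1 define the Fenchel coupling F_t(p) = h(p) − h(X_t) + (1/η_t)·⟨Σ_{s=1}^{t−1} g_s, p − X_t⟩. Then for every t ≥ 1 and every p ∈ X: η_{t+1} F_{t+1}(p) ≤ η_t F_t(p) − ⟨g_t, X_{t+1/2} − p⟩ + (η_{t+1} − η_t)(h(p) − h(X_1)) + ⟨g_t − g_{t−1}, X_{t+1/2} − X_{t+1}⟩ − η_t D(X_{t+1}, X_{t+1/2}) − η_t D(X_{t+1/2}, X_t). -/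

import Mathlib

open scoped RealInnerProductSpace
open Filter Finset Topology

noncomputable section

/-- Bregman divergence of a regularizer `h` with gradient map `Gh`. -/
def breg {F : Type*} [NormedAddCommGroup F] [InnerProductSpace ℝ F]
    (h : F → ℝ) (Gh : F → F) (p x : F) : ℝ :=
  h p - h x - ⟪Gh x, p - x⟫

/-- `h` is a regularizer on `X`: a convex differentiable function with gradient map `Gh`
that is `1`-strongly convex on `X`. -/
structure IsRegularizer {F : Type*} [NormedAddCommGroup F] [InnerProductSpace ℝ F]
    (X : Set F) (h : F → ℝ) (Gh : F → F) : Prop where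
  convex : ConvexOn ℝ Set.univ h
  grad : ∀ x : F, HasFDerivAt h (innerSL ℝ (Gh x)) x
  strong : StrongConvexOn X 1 h

/-- OptDA iterates: `Z t` is the base state `X_t` and `W t` is the played action `X_{t+1/2}`,
for feedback `g` (with `g 0 = 0`) and positive nondecreasing learning rates `η`. -/
structure IsOptDA {F : Type*} [NormedAddCommGroup F] [InnerProductSpace ℝ F]
    (X : Set F) (h : F → ℝ) (Gh : F → F)
    (η : ℕ → ℝ) (g : ℕ → F) (Z W : ℕ → F) : Prop where
  g_zero : g 0 = 0
  eta_pos : ∀ t : ℕ, 1 ≤ t → 0 < η t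
  eta_mono : ∀ t : ℕ, 1 ≤ t → η t ≤ η (t + 1)
  base_mem : ∀ t : ℕ, 1 ≤ t → Z t ∈ X
  lead_mem : ∀ t : ℕ, 1 ≤ t → W t ∈ X
  base_min : ∀ t : ℕ, 1 ≤ t → ∀ p ∈ X,
    ⟪∑ s ∈ Finset.Ico 1 t, g s, Z t⟫ + η t * h (Z t)
      ≤ ⟪∑ s ∈ Finset.Ico 1 t, g s, p⟫ + η t * h p
  lead_min : ∀ t : ℕ, 1 ≤ t → ∀ p ∈ X,
    ⟪g (t - 1), W t⟫ + η t * breg h Gh (W t) (Z t)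
      ≤ ⟪g (t - 1), p⟫ + η t * breg h Gh p (Z t)

/-- First-order optimality condition: if a differentiable function `f` with gradient `G`
at `x` is minimized over a convex set `X` at `x ∈ X`, then `⟪G, p - x⟫ ≥ 0` for all `p ∈ X`. -/
lemma min_varineq {F : Type*} [NormedAddCommGroup F] [InnerProductSpace ℝ F]
    {X : Set F} (hX : Convex ℝ X) {f : F → ℝ} {G : F} {x : F} (hx : x ∈ X)
    (hd : HasFDerivAt f (innerSL ℝ G) x)
    (hmin : ∀ p ∈ X, f x ≤ f p) : ∀ p ∈ X, 0 ≤ ⟪G, p - x⟫ := by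
  intro p hp
  set φ : ℝ → ℝ := fun l => f (x + l • (p - x)) with hφ
  have h1 : HasDerivAt (fun l : ℝ => x + l • (p - x)) (p - x) 0 := by
    simpa using ((hasDerivAt_id (0:ℝ)).smul_const (p - x)).const_add x
  have hd' : HasFDerivAt f (innerSL ℝ G) ((fun l : ℝ => x + l • (p - x)) 0) := by
    simpa using hd
  have hline : HasDerivAt φ ⟪G, p - x⟫ 0 := by
    have h2 := hd'.comp_hasDerivAt 0 h1
    simp at h2
    exact h2
  have hmem : ∀ l ∈ Set.Ioc (0:ℝ) 1, φ 0 ≤ φ l := by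
    intro l hl
    have hmemX : (1 - l) • x + l • p ∈ X :=
      hX hx hp (by linarith [hl.2]) (le_of_lt hl.1) (by ring)
    have heq : x + l • (p - x) = (1 - l) • x + l • p := by module
    have : f x ≤ f (x + l • (p - x)) := heq ▸ hmin _ hmemX
    simpa [hφ] using this
  have hslope := (hline.hasDerivWithinAt (s := Set.Ioi (0:ℝ)))
  rw [hasDerivWithinAt_iff_tendsto_slope] at hslope
  have hdiff : Set.Ioi (0:ℝ) \ {0} = Set.Ioi 0 := by
    simp [Set.diff_singleton_eq_self]
  rw [hdiff] at hslope
  have hev : ∀ᶠ l in 𝓝[>] (0:ℝ), 0 ≤ slope φ 0 l := by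
    filter_upwards [Ioc_mem_nhdsGT_of_mem (by simp : (0:ℝ) ∈ Set.Ico (0:ℝ) 1)] with l hl
    have hle := hmem l hl
    rw [slope_def_field]
    have : 0 ≤ (φ l - φ 0) / (l - 0) := div_nonneg (by linarith) (by simpa using hl.1.le)
    simpa [div_eq_iff] using this
  exact ge_of_tendsto hslope hev

/-- Template descent inequality for OptDA (Lemma 1, OptDA case). -/
theorem optda_template_descent
    {F : Type*} [NormedAddCommGroup F] [InnerProductSpace ℝ F]
    (X : Set F) (hXne : X.Nonempty) (hXcl : IsClosed X) (hXcv : Convex ℝ X)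
    (h : F → ℝ) (Gh : F → F) (hreg : IsRegularizer X h Gh)
    (η : ℕ → ℝ) (g : ℕ → F) (Z W : ℕ → F)
    (hrun : IsOptDA X h Gh η g Z W) :
    ∀ t : ℕ, 1 ≤ t → ∀ p ∈ X,
      η (t + 1) *
          (h p - h (Z (t + 1)) +
            (1 / η (t + 1)) * ⟪∑ s ∈ Finset.Ico 1 (t + 1), g s, p - Z (t + 1)⟫)
        ≤ η t * (h p - h (Z t) + (1 / η t) * ⟪∑ s ∈ Finset.Ico 1 t, g s, p - Z t⟫)
            - ⟪g t, W t - p⟫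
            + (η (t + 1) - η t) * (h p - h (Z 1))
            + ⟪g t - g (t - 1), W t - Z (t + 1)⟫
            - η t * breg h Gh (Z (t + 1)) (W t)
            - η t * breg h Gh (W t) (Z t) := by
  intro t ht p hp
  have ha : 0 < η t := hrun.eta_pos t ht
  have hb : 0 < η (t + 1) := hrun.eta_pos (t + 1) (by omega)
  have hZt : Z t ∈ X := hrun.base_mem t ht
  have hZt1 : Z (t + 1) ∈ X := hrun.base_mem (t + 1) (by omega)
  have hWt : W t ∈ X := hrun.lead_mem t ht
  -- VI for the base iterate `Z t`
  have dZ : HasFDerivAt (fun q : F => ⟪∑ s ∈ Finset.Ico 1 t, g s, q⟫ + η t * h q)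
      (innerSL ℝ ((∑ s ∈ Finset.Ico 1 t, g s) + η t • Gh (Z t))) (Z t) := by
    have hcl : innerSL ℝ ((∑ s ∈ Finset.Ico 1 t, g s) + η t • Gh (Z t))
        = innerSL ℝ (∑ s ∈ Finset.Ico 1 t, g s) + η t • innerSL ℝ (Gh (Z t)) := by
      ext v; simp [inner_add_left, inner_smul_left]
    rw [hcl]
    exact (innerSL ℝ (∑ s ∈ Finset.Ico 1 t, g s)).hasFDerivAt.add
      ((hreg.grad (Z t)).const_mul (η t))
  have VI1 : 0 ≤ ⟪∑ s ∈ Finset.Ico 1 t, g s, Z (t + 1)⟫ - ⟪∑ s ∈ Finset.Ico 1 t, g s, Z t⟫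
      + η t * (⟪Gh (Z t), Z (t + 1)⟫ - ⟪Gh (Z t), Z t⟫) := by
    have h0 := min_varineq hXcv hZt dZ (hrun.base_min t ht) (Z (t + 1)) hZt1
    simp only [inner_add_left, real_inner_smul_left, inner_sub_right] at h0
    linarith
  -- VI for the leading iterate `W t`
  have dW : HasFDerivAt (fun q : F => ⟪g (t - 1), q⟫ + η t * breg h Gh q (Z t))
      (innerSL ℝ (g (t - 1) + η t • (Gh (W t) - Gh (Z t)))) (W t) := by
    have hcl : innerSL ℝ (g (t - 1) + η t • (Gh (W t) - Gh (Z t)))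
        = innerSL ℝ (g (t - 1))
          + η t • (innerSL ℝ (Gh (W t)) - innerSL ℝ (Gh (Z t))) := by
      ext v; simp [inner_add_left, inner_smul_left, inner_sub_left]
    rw [hcl]
    have e1 : HasFDerivAt (fun q : F => ⟪Gh (Z t), q - Z t⟫)
        (innerSL ℝ (Gh (Z t))) (W t) := by
      have : HasFDerivAt (fun q : F => ⟪Gh (Z t), q⟫ - ⟪Gh (Z t), Z t⟫)
          (innerSL ℝ (Gh (Z t))) (W t) :=
        (innerSL ℝ (Gh (Z t))).hasFDerivAt.sub_const _
      simpa [inner_sub_right] using this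
    have e2 : HasFDerivAt (fun q : F => breg h Gh q (Z t))
        (innerSL ℝ (Gh (W t)) - innerSL ℝ (Gh (Z t))) (W t) := by
      exact ((hreg.grad (W t)).sub_const (h (Z t))).sub e1
    exact (innerSL ℝ (g (t - 1))).hasFDerivAt.add (e2.const_mul (η t))
  have VI2 : 0 ≤ ⟪g (t - 1), Z (t + 1)⟫ - ⟪g (t - 1), W t⟫
      + η t * (⟪Gh (W t), Z (t + 1)⟫ - ⟪Gh (W t), W t⟫
        - (⟪Gh (Z t), Z (t + 1)⟫ - ⟪Gh (Z t), W t⟫)) := by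
    have h0 := min_varineq hXcv hWt dW (hrun.lead_min t ht) (Z (t + 1)) hZt1
    simp only [inner_add_left, real_inner_smul_left, inner_sub_left, inner_sub_right] at h0
    linarith
  -- `Z 1` minimizes `h` on `X`
  have hZ1 : h (Z 1) ≤ h (Z (t + 1)) := by
    have := hrun.base_min 1 le_rfl (Z (t + 1)) hZt1
    simp only [Finset.Ico_self, Finset.sum_empty, inner_zero_left, zero_add] at this
    exact le_of_mul_le_mul_left this (hrun.eta_pos 1 le_rfl)
  have hfact : 0 ≤ (η (t + 1) - η t) * (h (Z (t + 1)) - h (Z 1)) :=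
    mul_nonneg (sub_nonneg.2 (hrun.eta_mono t ht)) (sub_nonneg.2 hZ1)
  -- clear the `1/η` factors
  have e1 : ∀ c : ℝ, 0 < c → ∀ A Y : ℝ, c * (A + (1 / c) * Y) = c * A + Y := by
    intro c hc A Y; field_simp
  rw [e1 (η (t + 1)) hb, e1 (η t) ha, Finset.sum_Ico_succ_top ht]
  simp only [breg, inner_add_left, inner_sub_left, inner_sub_right, mul_sub]
  linarith [VI1, VI2, hfact]
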